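/- arXiv:2110.14892 — 8 statements merged into one kernel-verified Lean document; each statement's English description precedes it below -/
import Mathlib

section
/- If a differentiable solution (S, E, I_a, I_s, H, R, D, R_a, R_s) of the extended SEIR system on [0, T] has all nine compartments nonnegative at time 0, then all nine compartments remain nonnegative on all of [0, T]. -/
open Set Filter Topology

/-- Right-sided limit of the difference quotient of the negative part of a
differentiable function. -/
lemma negpart_slope {X : ℝ → ℝ} {d x : ℝ} (hX : HasDerivAt X d x) :
    ∃ L : ℝ, Tendsto (fun z => (z - x)⁻¹ * (max (-X z) 0 - max (-X x) 0)) (𝓝[>] x) (𝓝 L) ∧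
      L ≤ max (-d) 0 ∧ (0 < X x → L = 0) := by
  have hle : (𝓝[>] x : Filter ℝ) ≤ 𝓝[≠] x :=
    nhdsWithin_mono x fun z hz => ne_of_gt hz
  have hslope : Tendsto (fun z => (z - x)⁻¹ * (X z - X x)) (𝓝[>] x) (𝓝 d) := by
    refine ((hasDerivAt_iff_tendsto_slope.1 hX).mono_left hle).congr fun z => ?_
    rw [slope_def_field]; ring
  rcases lt_trichotomy (X x) 0 with hx0 | hx0 | hx0
  · refine ⟨-d, ?_, le_max_left _ _, fun h => absurd hx0 (not_lt.2 h.le)⟩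
    have hev : ∀ᶠ z in 𝓝 x, X z < 0 := hX.continuousAt (Iio_mem_nhds hx0)
    refine hslope.neg.congr' ?_
    filter_upwards [hev.filter_mono nhdsWithin_le_nhds] with z hz
    rw [max_eq_left (neg_nonneg.2 hz.le), max_eq_left (neg_nonneg.2 hx0.le)]
    ring
  · refine ⟨max (-d) 0, ?_, le_refl _, fun h => absurd hx0 h.ne'⟩
    have h1 : Tendsto (fun z => max (-((z - x)⁻¹ * (X z - X x))) 0) (𝓝[>] x)
        (𝓝 (max (-d) 0)) := hslope.neg.max tendsto_const_nhds
    refine h1.congr' ?_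
    filter_upwards [self_mem_nhdsWithin] with z hz
    have hzx : (0:ℝ) ≤ (z - x)⁻¹ := inv_nonneg.2 (sub_pos.2 hz).le
    rw [hx0]
    simp only [neg_zero, max_self, sub_zero]
    rw [mul_max_of_nonneg _ _ hzx, mul_zero]
    congr 1
    ring
  · refine ⟨0, ?_, le_max_right _ _, fun _ => rfl⟩
    have hev : ∀ᶠ z in 𝓝 x, 0 < X z := hX.continuousAt (Ioi_mem_nhds hx0)
    refine tendsto_const_nhds.congr' ?_
    filter_upwards [hev.filter_mono nhdsWithin_le_nhds] with z hz
    rw [max_eq_right (neg_nonpos.2 hz.le), max_eq_right (neg_nonpos.2 hx0.le)]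
    simp

/-- Case split helper. -/
lemma comp_bound {L d v c : ℝ} (h1 : L ≤ max (-d) 0) (h2 : 0 < v → L = 0)
    (hc : 0 ≤ c) (hd : v ≤ 0 → -d ≤ c) : L ≤ c := by
  rcases le_or_gt v 0 with hv | hv
  · exact h1.trans (max_le (hd hv) hc)
  · rw [h2 hv]; exact hc

lemma neg_mul_le {a b M : ℝ} (ha : |a| ≤ M) (hb : |b| ≤ M) :
    -(a * b) ≤ M * max (-a) 0 + M * max (-b) 0 := by
  obtain ⟨ha1, ha2⟩ := abs_le.1 ha
  obtain ⟨hb1, hb2⟩ := abs_le.1 hb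
  rcases le_total a 0 with h | h <;> rcases le_total b 0 with h' | h'
  · rw [max_eq_left (neg_nonneg.2 h), max_eq_left (neg_nonneg.2 h')]
    nlinarith
  · rw [max_eq_left (neg_nonneg.2 h), max_eq_right (neg_nonpos.2 h')]
    nlinarith
  · rw [max_eq_right (neg_nonpos.2 h), max_eq_left (neg_nonneg.2 h')]
    nlinarith
  · rw [max_eq_right (neg_nonpos.2 h), max_eq_right (neg_nonpos.2 h')]
    nlinarith


lemma seir_aux1 {a s M : ℝ} (h : -M ≤ a) (hs : s ≤ 0) : a * s ≤ M * (-s) := by nlinarith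

lemma seir_aux2 {βa βs A B s M : ℝ} (hβa : 0 ≤ βa) (hβs : 0 ≤ βs)
    (h1 : A * s ≤ M * (-s)) (h2 : B * s ≤ M * (-s)) :
    βa * A * s + βs * B * s ≤ (βa + βs) * M * (-s) := by nlinarith

lemma seir_aux3 {βa βs A B s M nS nA nB : ℝ} (hβa : 0 ≤ βa) (hβs : 0 ≤ βs) (hM : 0 ≤ M)
    (hnS : 0 ≤ nS) (hnA : 0 ≤ nA) (hnB : 0 ≤ nB)
    (k1 : -(A * s) ≤ M * nA + M * nS) (k2 : -(B * s) ≤ M * nB + M * nS) :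
    -(βa * A * s + βs * B * s) ≤ (βa + βs) * M * (nS + nA + nB) := by
  nlinarith [mul_le_mul_of_nonneg_left k1 hβa, mul_le_mul_of_nonneg_left k2 hβs,
    mul_nonneg (mul_nonneg hβa hM) hnB, mul_nonneg (mul_nonneg hβs hM) hnA]

set_option maxHeartbeats 2000000 in
/-- If a differentiable solution of the extended SEIR system on `[0, T]` has all nine
compartments nonnegative at time `0`, then all nine compartments remain nonnegative
on all of `[0, T]`. -/
theorem extSEIR_nonneg_invariant
    (βa βs ε δ γa γs γH γD τH N : ℝ)
    (hβa : 0 < βa) (hβs : 0 < βs) (hε : 0 < ε) (hδ : 0 < δ)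
    (hγa : 0 < γa) (hγs : 0 < γs) (hγH : 0 < γH) (hγD : 0 < γD)
    (hτH : 0 < τH) (hN : 0 < N)
    (T : ℝ) (hT : 0 ≤ T) (S E Ia Is H R D Ra Rs : ℝ → ℝ)
    (hS : ∀ t ∈ Icc 0 T, HasDerivAt S (-(βa * Ia t * S t / N) - βs * Is t * S t / N) t)
    (hE : ∀ t ∈ Icc 0 T, HasDerivAt E (βa * Ia t * S t / N + βs * Is t * S t / N - ε * E t) t)
    (hIa : ∀ t ∈ Icc 0 T, HasDerivAt Ia (ε * E t - δ * Ia t - γa * Ia t) t)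
    (hIs : ∀ t ∈ Icc 0 T, HasDerivAt Is (δ * Ia t - τH * Is t - γs * Is t) t)
    (hH : ∀ t ∈ Icc 0 T, HasDerivAt H (τH * Is t - γH * H t - γD * H t) t)
    (hR : ∀ t ∈ Icc 0 T, HasDerivAt R (γH * H t) t)
    (hD : ∀ t ∈ Icc 0 T, HasDerivAt D (γD * H t) t)
    (hRa : ∀ t ∈ Icc 0 T, HasDerivAt Ra (γa * Ia t) t)
    (hRs : ∀ t ∈ Icc 0 T, HasDerivAt Rs (γs * Is t) t)
    (h0 : 0 ≤ S 0 ∧ 0 ≤ E 0 ∧ 0 ≤ Ia 0 ∧ 0 ≤ Is 0 ∧ 0 ≤ H 0 ∧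
          0 ≤ R 0 ∧ 0 ≤ D 0 ∧ 0 ≤ Ra 0 ∧ 0 ≤ Rs 0) :
    ∀ t ∈ Icc 0 T, 0 ≤ S t ∧ 0 ≤ E t ∧ 0 ≤ Ia t ∧ 0 ≤ Is t ∧ 0 ≤ H t ∧
      0 ≤ R t ∧ 0 ≤ D t ∧ 0 ≤ Ra t ∧ 0 ≤ Rs t := by
  obtain ⟨hS0, hE0, hIa0, hIs0, hH0, hR0, hD0, hRa0, hRs0⟩ := h0
  have hSc : ContinuousOn S (Icc 0 T) := fun t ht => (hS t ht).continuousAt.continuousWithinAt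
  have hEc : ContinuousOn E (Icc 0 T) := fun t ht => (hE t ht).continuousAt.continuousWithinAt
  have hIac : ContinuousOn Ia (Icc 0 T) := fun t ht => (hIa t ht).continuousAt.continuousWithinAt
  have hIsc : ContinuousOn Is (Icc 0 T) := fun t ht => (hIs t ht).continuousAt.continuousWithinAt
  have hHc : ContinuousOn H (Icc 0 T) := fun t ht => (hH t ht).continuousAt.continuousWithinAt
  have hRc : ContinuousOn R (Icc 0 T) := fun t ht => (hR t ht).continuousAt.continuousWithinAt
  have hDc : ContinuousOn D (Icc 0 T) := fun t ht => (hD t ht).continuousAt.continuousWithinAt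
  have hRac : ContinuousOn Ra (Icc 0 T) := fun t ht => (hRa t ht).continuousAt.continuousWithinAt
  have hRsc : ContinuousOn Rs (Icc 0 T) := fun t ht => (hRs t ht).continuousAt.continuousWithinAt
  obtain ⟨C1, hC1⟩ := isCompact_Icc.exists_bound_of_continuousOn hSc
  obtain ⟨C2, hC2⟩ := isCompact_Icc.exists_bound_of_continuousOn hIac
  obtain ⟨C3, hC3⟩ := isCompact_Icc.exists_bound_of_continuousOn hIsc
  obtain ⟨M, hMdef⟩ : ∃ M : ℝ, M = max (max C1 C2) (max C3 0) := ⟨_, rfl⟩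
  have hM0 : (0:ℝ) ≤ M := hMdef ▸ le_trans (le_max_right C3 0) (le_max_right _ _)
  have hMS : ∀ t ∈ Icc (0:ℝ) T, |S t| ≤ M := fun t ht => by
    have h := hC1 t ht; rw [Real.norm_eq_abs] at h
    exact hMdef ▸ h.trans ((le_max_left C1 C2).trans (le_max_left _ _))
  have hMIa : ∀ t ∈ Icc (0:ℝ) T, |Ia t| ≤ M := fun t ht => by
    have h := hC2 t ht; rw [Real.norm_eq_abs] at h
    exact hMdef ▸ h.trans ((le_max_right C1 C2).trans (le_max_left _ _))
  have hMIs : ∀ t ∈ Icc (0:ℝ) T, |Is t| ≤ M := fun t ht => by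
    have h := hC3 t ht; rw [Real.norm_eq_abs] at h
    exact hMdef ▸ h.trans ((le_max_left C3 0).trans (le_max_right _ _))
  obtain ⟨P, hPdef⟩ : ∃ P : ℝ, P = (βa + βs) * M / N := ⟨_, rfl⟩
  have hP0 : 0 ≤ P := by rw [hPdef]; positivity
  obtain ⟨K, hKdef⟩ : ∃ K : ℝ, K = P + ε + δ + τH + γH + γD + γa + γs := ⟨_, rfl⟩
  have hK0 : 0 ≤ K := by rw [hKdef]; positivity
  obtain ⟨m, hmdef⟩ : ∃ m : ℝ → ℝ, m = fun t => max (-S t) 0 + max (-E t) 0 + max (-Ia t) 0 +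
      max (-Is t) 0 + max (-H t) 0 + max (-R t) 0 + max (-D t) 0 + max (-Ra t) 0 + max (-Rs t) 0 :=
    ⟨_, rfl⟩
  have hmnn : ∀ t, 0 ≤ m t := fun t => by
    simp only [hmdef]
    refine add_nonneg (add_nonneg (add_nonneg (add_nonneg (add_nonneg (add_nonneg
      (add_nonneg (add_nonneg ?_ ?_) ?_) ?_) ?_) ?_) ?_) ?_) ?_ <;> exact le_max_right _ _
  have hmc : ContinuousOn m (Icc (0:ℝ) T) := by
    rw [hmdef]
    exact ((((((((hSc.neg.sup continuousOn_const).add (hEc.neg.sup continuousOn_const)).add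
      (hIac.neg.sup continuousOn_const)).add (hIsc.neg.sup continuousOn_const)).add
      (hHc.neg.sup continuousOn_const)).add (hRc.neg.sup continuousOn_const)).add
      (hDc.neg.sup continuousOn_const)).add (hRac.neg.sup continuousOn_const)).add
      (hRsc.neg.sup continuousOn_const)
  have hm0 : m 0 ≤ 0 := by
    simp only [hmdef]
    rw [max_eq_right (neg_nonpos.2 hS0), max_eq_right (neg_nonpos.2 hE0),
      max_eq_right (neg_nonpos.2 hIa0), max_eq_right (neg_nonpos.2 hIs0),
      max_eq_right (neg_nonpos.2 hH0), max_eq_right (neg_nonpos.2 hR0),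
      max_eq_right (neg_nonpos.2 hD0), max_eq_right (neg_nonpos.2 hRa0),
      max_eq_right (neg_nonpos.2 hRs0)]
    norm_num
  have key : ∀ t ∈ Icc (0:ℝ) T, m t ≤ gronwallBound 0 (9*K) 0 (t - 0) := by
    apply le_gronwallBound_of_liminf_deriv_right_le (f' := fun y => 9*K*m y) hmc ?_ hm0
      (fun y _ => le_of_eq (add_zero _).symm)
    intro x hx r hr
    have hxI : x ∈ Icc (0:ℝ) T := Ico_subset_Icc_self hx
    obtain ⟨L1, hT1, hb1, hz1⟩ := negpart_slope (hS x hxI)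
    obtain ⟨L2, hT2, hb2, hz2⟩ := negpart_slope (hE x hxI)
    obtain ⟨L3, hT3, hb3, hz3⟩ := negpart_slope (hIa x hxI)
    obtain ⟨L4, hT4, hb4, hz4⟩ := negpart_slope (hIs x hxI)
    obtain ⟨L5, hT5, hb5, hz5⟩ := negpart_slope (hH x hxI)
    obtain ⟨L6, hT6, hb6, hz6⟩ := negpart_slope (hR x hxI)
    obtain ⟨L7, hT7, hb7, hz7⟩ := negpart_slope (hD x hxI)
    obtain ⟨L8, hT8, hb8, hz8⟩ := negpart_slope (hRa x hxI)
    obtain ⟨L9, hT9, hb9, hz9⟩ := negpart_slope (hRs x hxI)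
    have q1 : (0:ℝ) ≤ max (-S x) 0 := le_max_right _ _
    have q2 : (0:ℝ) ≤ max (-E x) 0 := le_max_right _ _
    have q3 : (0:ℝ) ≤ max (-Ia x) 0 := le_max_right _ _
    have q4 : (0:ℝ) ≤ max (-Is x) 0 := le_max_right _ _
    have q5 : (0:ℝ) ≤ max (-H x) 0 := le_max_right _ _
    have q6 : (0:ℝ) ≤ max (-R x) 0 := le_max_right _ _
    have q7 : (0:ℝ) ≤ max (-D x) 0 := le_max_right _ _
    have q8 : (0:ℝ) ≤ max (-Ra x) 0 := le_max_right _ _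
    have q9 : (0:ℝ) ≤ max (-Rs x) 0 := le_max_right _ _
    have e1 : max (-S x) 0 ≤ m x := by simp only [hmdef]; linarith
    have e2 : max (-E x) 0 ≤ m x := by simp only [hmdef]; linarith
    have e3 : max (-Ia x) 0 ≤ m x := by simp only [hmdef]; linarith
    have e4 : max (-Is x) 0 ≤ m x := by simp only [hmdef]; linarith
    have e5 : max (-H x) 0 ≤ m x := by simp only [hmdef]; linarith
    have hcK : 0 ≤ K * m x := mul_nonneg hK0 (hmnn x)
    have hεK : ε ≤ K := by rw [hKdef]; linarith
    have hδK : δ ≤ K := by rw [hKdef]; linarith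
    have hτK : τH ≤ K := by rw [hKdef]; linarith
    have hγHK : γH ≤ K := by rw [hKdef]; linarith
    have hγDK : γD ≤ K := by rw [hKdef]; linarith
    have hγaK : γa ≤ K := by rw [hKdef]; linarith
    have hγsK : γs ≤ K := by rw [hKdef]; linarith
    have hPK : P ≤ K := by rw [hKdef]; linarith
    have hL1 : L1 ≤ K * m x := by
      refine comp_bound hb1 hz1 hcK fun hv => ?_
      have hIaS : Ia x * S x ≤ M * (-S x) := seir_aux1 (abs_le.1 (hMIa x hxI)).1 hv
      have hIsS : Is x * S x ≤ M * (-S x) := seir_aux1 (abs_le.1 (hMIs x hxI)).1 hv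
      have hnum : βa * Ia x * S x + βs * Is x * S x ≤ (βa + βs) * M * (-S x) :=
        seir_aux2 hβa.le hβs.le hIaS hIsS
      have h2 : (βa * Ia x * S x + βs * Is x * S x) / N ≤ ((βa + βs) * M * (-S x)) / N :=
        (div_le_div_iff_of_pos_right hN).2 hnum
      have h3 : -S x ≤ m x := le_trans (le_max_left _ _) e1
      calc -(-(βa * Ia x * S x / N) - βs * Is x * S x / N)
          = (βa * Ia x * S x + βs * Is x * S x) / N := by ring
        _ ≤ ((βa + βs) * M * (-S x)) / N := h2
        _ = P * (-S x) := by rw [hPdef]; ring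
        _ ≤ K * m x := mul_le_mul hPK h3 (neg_nonneg.2 hv) hK0
    have hL2 : L2 ≤ K * m x := by
      refine comp_bound hb2 hz2 hcK fun hv => ?_
      have k1 := neg_mul_le (hMIa x hxI) (hMS x hxI)
      have k2 := neg_mul_le (hMIs x hxI) (hMS x hxI)
      have hnum : -(βa * Ia x * S x + βs * Is x * S x) ≤
          (βa + βs) * M * (max (-S x) 0 + max (-Ia x) 0 + max (-Is x) 0) := by
        have k1' : -(Ia x * S x) ≤ M * max (-Ia x) 0 + M * max (-S x) 0 := k1
        have k2' : -(Is x * S x) ≤ M * max (-Is x) 0 + M * max (-S x) 0 := k2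
        exact seir_aux3 hβa.le hβs.le hM0 q1 q3 q4 k1' k2'
      have h2 : (-(βa * Ia x * S x + βs * Is x * S x)) / N ≤
          ((βa + βs) * M * (max (-S x) 0 + max (-Ia x) 0 + max (-Is x) 0)) / N :=
        (div_le_div_iff_of_pos_right hN).2 hnum
      have hεE : 0 ≤ ε * (-E x) := mul_nonneg hε.le (neg_nonneg.2 hv)
      have hsum : max (-S x) 0 + max (-Ia x) 0 + max (-Is x) 0 ≤ m x := by
        simp only [hmdef]; linarith
      have h4 : P * (max (-S x) 0 + max (-Ia x) 0 + max (-Is x) 0) ≤ K * m x :=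
        mul_le_mul hPK hsum (by linarith) hK0
      have h5 : -(βa * Ia x * S x / N + βs * Is x * S x / N - ε * E x)
          = (-(βa * Ia x * S x + βs * Is x * S x)) / N + ε * E x := by ring
      have h6 : ((βa + βs) * M * (max (-S x) 0 + max (-Ia x) 0 + max (-Is x) 0)) / N
          = P * (max (-S x) 0 + max (-Ia x) 0 + max (-Is x) 0) := by rw [hPdef]; ring
      rw [h5]
      linarith
    have hL3 : L3 ≤ K * m x := by
      refine comp_bound hb3 hz3 hcK fun hv => ?_
      have h1 : ε * (-E x) ≤ ε * max (-E x) 0 := mul_le_mul_of_nonneg_left (le_max_left _ _) hε.le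
      have h2 : ε * max (-E x) 0 ≤ K * m x := mul_le_mul hεK e2 q2 hK0
      have h3 : 0 ≤ δ * (-Ia x) := mul_nonneg hδ.le (neg_nonneg.2 hv)
      have h4 : 0 ≤ γa * (-Ia x) := mul_nonneg hγa.le (neg_nonneg.2 hv)
      linarith
    have hL4 : L4 ≤ K * m x := by
      refine comp_bound hb4 hz4 hcK fun hv => ?_
      have h1 : δ * (-Ia x) ≤ δ * max (-Ia x) 0 := mul_le_mul_of_nonneg_left (le_max_left _ _) hδ.le
      have h2 : δ * max (-Ia x) 0 ≤ K * m x := mul_le_mul hδK e3 q3 hK0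
      have h3 : 0 ≤ τH * (-Is x) := mul_nonneg hτH.le (neg_nonneg.2 hv)
      have h4 : 0 ≤ γs * (-Is x) := mul_nonneg hγs.le (neg_nonneg.2 hv)
      linarith
    have hL5 : L5 ≤ K * m x := by
      refine comp_bound hb5 hz5 hcK fun hv => ?_
      have h1 : τH * (-Is x) ≤ τH * max (-Is x) 0 :=
        mul_le_mul_of_nonneg_left (le_max_left _ _) hτH.le
      have h2 : τH * max (-Is x) 0 ≤ K * m x := mul_le_mul hτK e4 q4 hK0
      have h3 : 0 ≤ γH * (-H x) := mul_nonneg hγH.le (neg_nonneg.2 hv)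
      have h4 : 0 ≤ γD * (-H x) := mul_nonneg hγD.le (neg_nonneg.2 hv)
      linarith
    have hL6 : L6 ≤ K * m x := by
      refine comp_bound hb6 hz6 hcK fun _ => ?_
      have h1 : γH * (-H x) ≤ γH * max (-H x) 0 :=
        mul_le_mul_of_nonneg_left (le_max_left _ _) hγH.le
      have h2 : γH * max (-H x) 0 ≤ K * m x := mul_le_mul hγHK e5 q5 hK0
      linarith
    have hL7 : L7 ≤ K * m x := by
      refine comp_bound hb7 hz7 hcK fun _ => ?_
      have h1 : γD * (-H x) ≤ γD * max (-H x) 0 :=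
        mul_le_mul_of_nonneg_left (le_max_left _ _) hγD.le
      have h2 : γD * max (-H x) 0 ≤ K * m x := mul_le_mul hγDK e5 q5 hK0
      linarith
    have hL8 : L8 ≤ K * m x := by
      refine comp_bound hb8 hz8 hcK fun _ => ?_
      have h1 : γa * (-Ia x) ≤ γa * max (-Ia x) 0 :=
        mul_le_mul_of_nonneg_left (le_max_left _ _) hγa.le
      have h2 : γa * max (-Ia x) 0 ≤ K * m x := mul_le_mul hγaK e3 q3 hK0
      linarith
    have hL9 : L9 ≤ K * m x := by
      refine comp_bound hb9 hz9 hcK fun _ => ?_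
      have h1 : γs * (-Is x) ≤ γs * max (-Is x) 0 :=
        mul_le_mul_of_nonneg_left (le_max_left _ _) hγs.le
      have h2 : γs * max (-Is x) 0 ≤ K * m x := mul_le_mul hγsK e4 q4 hK0
      linarith
    have hsumT : Filter.Tendsto (fun z => (z - x)⁻¹ * (m z - m x)) (nhdsWithin x (Ioi x))
        (nhds (L1 + L2 + L3 + L4 + L5 + L6 + L7 + L8 + L9)) := by
      have h := ((((((((hT1.add hT2).add hT3).add hT4).add hT5).add hT6).add hT7).add hT8).add hT9)
      refine h.congr fun z => ?_
      simp only [hmdef]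
      ring
    have hLr : L1 + L2 + L3 + L4 + L5 + L6 + L7 + L8 + L9 < r := by
      have h' : L1 + L2 + L3 + L4 + L5 + L6 + L7 + L8 + L9 ≤ 9 * K * m x := by linarith
      have hr' : 9 * K * m x < r := hr
      linarith
    exact (hsumT.eventually_lt_const hLr).frequently
  intro t ht
  have hmt : m t ≤ 0 := by
    have h := key t ht
    rwa [gronwallBound_ε0_δ0] at h
  simp only [hmdef] at hmt
  have q1 : (0:ℝ) ≤ max (-S t) 0 := le_max_right _ _
  have q2 : (0:ℝ) ≤ max (-E t) 0 := le_max_right _ _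
  have q3 : (0:ℝ) ≤ max (-Ia t) 0 := le_max_right _ _
  have q4 : (0:ℝ) ≤ max (-Is t) 0 := le_max_right _ _
  have q5 : (0:ℝ) ≤ max (-H t) 0 := le_max_right _ _
  have q6 : (0:ℝ) ≤ max (-R t) 0 := le_max_right _ _
  have q7 : (0:ℝ) ≤ max (-D t) 0 := le_max_right _ _
  have q8 : (0:ℝ) ≤ max (-Ra t) 0 := le_max_right _ _
  have q9 : (0:ℝ) ≤ max (-Rs t) 0 := le_max_right _ _
  refine ⟨by linarith [le_max_left (-S t) (0:ℝ)], by linarith [le_max_left (-E t) (0:ℝ)],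
    by linarith [le_max_left (-Ia t) (0:ℝ)], by linarith [le_max_left (-Is t) (0:ℝ)],
    by linarith [le_max_left (-H t) (0:ℝ)], by linarith [le_max_left (-R t) (0:ℝ)],
    by linarith [le_max_left (-D t) (0:ℝ)], by linarith [le_max_left (-Ra t) (0:ℝ)],
    by linarith [le_max_left (-Rs t) (0:ℝ)]⟩
end

section
/- Along any differentiable solution of the extended SEIR system on [0, T] whose compartments are all nonnegative and sum to N on [0, T], one has the lower bound S(t) ≥ S(0) · exp(−(β_a + β_s) t) for all t in [0, T]; in particular, if S(0) > 0 then S(t) > 0 for all t in [0, T]. -/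
open Set

/-- Along any differentiable nonnegative solution of the extended SEIR system on `[0, T]`
whose compartments sum to `N`, one has `S t ≥ S 0 * exp (-(βa + βs) t)` on `[0, T]`;
in particular, if `S 0 > 0` then `S` stays positive on `[0, T]`. -/
theorem extSEIR_susceptible_lower_bound
    (βa βs ε δ γa γs γH γD τH N : ℝ)
    (hβa : 0 < βa) (hβs : 0 < βs) (hε : 0 < ε) (hδ : 0 < δ)
    (hγa : 0 < γa) (hγs : 0 < γs) (hγH : 0 < γH) (hγD : 0 < γD)
    (hτH : 0 < τH) (hN : 0 < N)
    (T : ℝ) (hT : 0 ≤ T) (S E Ia Is H R D Ra Rs : ℝ → ℝ)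
    (hS : ∀ t ∈ Icc 0 T, HasDerivAt S (-(βa * Ia t * S t / N) - βs * Is t * S t / N) t)
    (hE : ∀ t ∈ Icc 0 T, HasDerivAt E (βa * Ia t * S t / N + βs * Is t * S t / N - ε * E t) t)
    (hIa : ∀ t ∈ Icc 0 T, HasDerivAt Ia (ε * E t - δ * Ia t - γa * Ia t) t)
    (hIs : ∀ t ∈ Icc 0 T, HasDerivAt Is (δ * Ia t - τH * Is t - γs * Is t) t)
    (hH : ∀ t ∈ Icc 0 T, HasDerivAt H (τH * Is t - γH * H t - γD * H t) t)
    (hR : ∀ t ∈ Icc 0 T, HasDerivAt R (γH * H t) t)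
    (hD : ∀ t ∈ Icc 0 T, HasDerivAt D (γD * H t) t)
    (hRa : ∀ t ∈ Icc 0 T, HasDerivAt Ra (γa * Ia t) t)
    (hRs : ∀ t ∈ Icc 0 T, HasDerivAt Rs (γs * Is t) t)
    (hnonneg : ∀ t ∈ Icc 0 T, 0 ≤ S t ∧ 0 ≤ E t ∧ 0 ≤ Ia t ∧ 0 ≤ Is t ∧ 0 ≤ H t ∧
      0 ≤ R t ∧ 0 ≤ D t ∧ 0 ≤ Ra t ∧ 0 ≤ Rs t)
    (hsum : ∀ t ∈ Icc 0 T,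
      S t + E t + Ia t + Is t + H t + R t + D t + Ra t + Rs t = N) :
    (∀ t ∈ Icc 0 T, S 0 * Real.exp (-(βa + βs) * t) ≤ S t) ∧
      (0 < S 0 → ∀ t ∈ Icc 0 T, 0 < S t) := by

  set c := βa + βs with hc
  set f : ℝ → ℝ := fun t => S t * Real.exp (c * t) with hf
  have hexp : ∀ t : ℝ, HasDerivAt (fun t => Real.exp (c * t)) (Real.exp (c * t) * c) t := by
    intro t
    have h := ((hasDerivAt_id t).const_mul c).exp
    simpa using h
  have hfd : ∀ t ∈ Icc (0:ℝ) T, HasDerivAt f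
      ((-(βa * Ia t * S t / N) - βs * Is t * S t / N) * Real.exp (c * t)
        + S t * (Real.exp (c * t) * c)) t := by
    intro t ht
    exact (hS t ht).mul (hexp t)
  have hderpos : ∀ t ∈ Icc (0:ℝ) T,
      0 ≤ (-(βa * Ia t * S t / N) - βs * Is t * S t / N) * Real.exp (c * t)
        + S t * (Real.exp (c * t) * c) := by
    intro t ht
    obtain ⟨hS0, hE0, hIa0, hIs0, hH0, hR0, hD0, hRa0, hRs0⟩ := hnonneg t ht
    have hsumt := hsum t ht
    have hIaN : Ia t ≤ N := by linarith
    have hIsN : Is t ≤ N := by linarith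
    have h1 : βa * Ia t * S t / N ≤ βa * S t := by
      rw [div_le_iff₀ hN]
      nlinarith [mul_nonneg (mul_nonneg hβa.le hS0) (sub_nonneg.mpr hIaN)]
    have h2 : βs * Is t * S t / N ≤ βs * S t := by
      rw [div_le_iff₀ hN]
      nlinarith [mul_nonneg (mul_nonneg hβs.le hS0) (sub_nonneg.mpr hIsN)]
    have hkey : 0 ≤ (-(βa * Ia t * S t / N) - βs * Is t * S t / N) + S t * c := by
      simp only [hc]; nlinarith
    have hepos : 0 < Real.exp (c * t) := Real.exp_pos _
    calc (0:ℝ) ≤ ((-(βa * Ia t * S t / N) - βs * Is t * S t / N) + S t * c)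
          * Real.exp (c * t) := mul_nonneg hkey hepos.le
      _ = (-(βa * Ia t * S t / N) - βs * Is t * S t / N) * Real.exp (c * t)
          + S t * (Real.exp (c * t) * c) := by ring
  have hmono : MonotoneOn f (Icc 0 T) := by
    apply monotoneOn_of_deriv_nonneg (convex_Icc 0 T)
    · intro t ht
      exact (hfd t ht).continuousAt.continuousWithinAt
    · intro t ht
      rw [interior_Icc] at ht
      exact (hfd t (Ioo_subset_Icc_self ht)).differentiableAt.differentiableWithinAt
    · intro t ht
      rw [interior_Icc] at ht
      rw [(hfd t (Ioo_subset_Icc_self ht)).deriv]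
      exact hderpos t (Ioo_subset_Icc_self ht)
  have hmain : ∀ t ∈ Icc (0:ℝ) T, S 0 * Real.exp (-(βa + βs) * t) ≤ S t := by
    intro t ht
    have h0 : (0:ℝ) ∈ Icc (0:ℝ) T := ⟨le_refl 0, hT⟩
    have := hmono h0 ht ht.1
    simp only [hf, mul_zero, Real.exp_zero, mul_one] at this
    have h3 : S 0 * Real.exp (-(βa + βs) * t) ≤ S t * Real.exp (c * t) * Real.exp (-(βa + βs) * t) :=
      mul_le_mul_of_nonneg_right this (Real.exp_pos _).le
    calc S 0 * Real.exp (-(βa + βs) * t) ≤ S t * Real.exp (c * t) * Real.exp (-(βa + βs) * t) := h3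
      _ = S t * Real.exp (c * t + -(βa + βs) * t) := by rw [mul_assoc, Real.exp_add]
      _ = S t := by rw [hc]; ring_nf; simp
  refine ⟨hmain, fun hS0pos t ht => ?_⟩
  have := hmain t ht
  have : 0 < S 0 * Real.exp (-(βa + βs) * t) := mul_pos hS0pos (Real.exp_pos _)
  linarith [hmain t ht]
end

section
/- Let F be the 3×3 real matrix with first row (0, β_a, β_s) and all other entries zero, and let V be the 3×3 real matrix with rows (ε, 0, 0), (−ε, δ + γ_a, 0), (0, −δ, γ_s + τ_H), where all parameters are positive. Then V is invertible and the characteristic polynomial of the next-generation matrix F V⁻¹ is X²(X − R₀); equivalently, the eigenvalues of F V⁻¹ are 0, 0, and R₀, where R₀ = β_a/(δ + γ_a) + β_s δ/((δ + γ_a)(γ_s + τ_H)). -/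
open Matrix Polynomial

/-- For the extended SEIR model, the transition matrix `V` is invertible and the
characteristic polynomial of the next-generation matrix `F * V⁻¹` is `X² (X - R₀)`,
so its eigenvalues are `0, 0, R₀`. -/
theorem extSEIR_next_generation_charpoly
    (βa βs ε δ γa γs τH : ℝ)
    (hβa : 0 < βa) (hβs : 0 < βs) (hε : 0 < ε) (hδ : 0 < δ)
    (hγa : 0 < γa) (hγs : 0 < γs) (hτH : 0 < τH)
    (F V : Matrix (Fin 3) (Fin 3) ℝ)
    (hF : F = !![0, βa, βs; 0, 0, 0; 0, 0, 0])
    (hV : V = !![ε, 0, 0; -ε, δ + γa, 0; 0, -δ, γs + τH])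
    (R₀ : ℝ)
    (hR₀ : R₀ = βa / (δ + γa) + βs * δ / ((δ + γa) * (γs + τH))) :
    IsUnit V.det ∧ (F * V⁻¹).charpoly = X ^ 2 * (X - C R₀) := by
  have ha : (δ + γa) ≠ 0 := by positivity
  have hb : (γs + τH) ≠ 0 := by positivity
  have hε' : ε ≠ 0 := ne_of_gt hε
  have hdet : V.det = ε * (δ + γa) * (γs + τH) := by
    subst hV; simp [Matrix.det_fin_three]
  have hunit : IsUnit V.det := by
    rw [hdet]; exact (isUnit_iff_ne_zero).2 (by positivity)
  refine ⟨hunit, ?_⟩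
  set a := δ + γa
  set b := γs + τH
  have hVinv : V⁻¹ = !![ε⁻¹, 0, 0; a⁻¹, a⁻¹, 0; δ/(a*b), δ/(a*b), b⁻¹] := by
    apply Matrix.inv_eq_right_inv
    subst hV
    ext i j
    fin_cases i <;> fin_cases j <;>
      simp [Matrix.mul_apply, Fin.sum_univ_three, Matrix.vecHead, Matrix.vecTail] <;>
      field_simp <;> ring
  have hM : F * V⁻¹ = !![R₀, R₀, βs/b; 0, 0, 0; 0, 0, 0] := by
    rw [hF, hVinv]
    ext i j
    fin_cases i <;> fin_cases j <;>
      simp [Matrix.mul_apply, Fin.sum_univ_three, hR₀, Matrix.vecHead, Matrix.vecTail] <;>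
      field_simp
  rw [hM, Matrix.charpoly, Matrix.det_fin_three]
  simp [Matrix.charmatrix_apply, Matrix.one_apply, Matrix.vecHead, Matrix.vecTail]
  ring
end

section
/- Let J be the 3×3 real matrix with rows (−ε, β_a, β_s), (ε, −(δ + γ_a), 0), (0, δ, −(γ_s + τ_H)), where all parameters are positive. If R₀ < 1, where R₀ = β_a/(δ + γ_a) + β_s δ/((δ + γ_a)(γ_s + τ_H)), then every complex root of the characteristic polynomial of J has strictly negative real part (i.e. the disease-free equilibrium is linearly stable). -/
open Matrix Polynomial

/-- If `R₀ < 1`, every complex root of the characteristic polynomial of the Jacobian `J`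
of the infected subsystem at the disease-free equilibrium has strictly negative real
part: the disease-free equilibrium is linearly stable. -/
theorem extSEIR_DFE_linearly_stable
    (βa βs ε δ γa γs τH : ℝ)
    (hβa : 0 < βa) (hβs : 0 < βs) (hε : 0 < ε) (hδ : 0 < δ)
    (hγa : 0 < γa) (hγs : 0 < γs) (hτH : 0 < τH)
    (J : Matrix (Fin 3) (Fin 3) ℝ)
    (hJ : J = !![-ε, βa, βs; ε, -(δ + γa), 0; 0, δ, -(γs + τH)])
    (hR₀ : βa / (δ + γa) + βs * δ / ((δ + γa) * (γs + τH)) < 1) :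
    ∀ z : ℂ, (J.charpoly.map (algebraMap ℝ ℂ)).IsRoot z → z.re < 0 := by
  intro z hz
  by_contra hre
  push_neg at hre
  set A : ℝ := δ + γa with hAdef
  set B : ℝ := γs + τH with hBdef
  have hA : 0 < A := by positivity
  have hB : 0 < B := by positivity
  -- R₀ < 1 gives βa * B + βs * δ < A * B
  have h1 : βa * B + βs * δ < A * B := by
    have hc : (βa * B + βs * δ) / (A * B) = βa / A + βs * δ / (A * B) := by
      field_simp
    have h2 : (βa * B + βs * δ) / (A * B) < 1 := by rw [hc]; exact hR₀
    exact (div_lt_one (by positivity)).mp h2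
  have hβaA : βa < A := by nlinarith
  -- the root equation
  have heval : Polynomial.eval₂ (algebraMap ℝ ℂ) z J.charpoly =
      (z + ε) * ((z + A) * (z + B)) - (βa * ε * (z + B) + βs * (ε * δ)) := by
    subst hJ
    rw [Matrix.charpoly, Matrix.det_fin_three]
    simp [charmatrix_apply_eq, charmatrix_apply_ne]
    ring
  have hroot : (z + ε) * ((z + A) * (z + B)) = ↑ε * (↑βa * (z + B) + ↑βs * ↑δ) := by
    have h0 : Polynomial.eval₂ (algebraMap ℝ ℂ) z J.charpoly = 0 := by
      rw [← Polynomial.eval_map]; exact hz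
    rw [heval] at h0
    linear_combination h0
  -- lower bounds on absolute values
  have key : ∀ t : ℝ, 0 ≤ t → t ≤ ‖z + t‖ := by
    intro t ht
    calc t ≤ z.re + t := by linarith
    _ = (z + (t : ℂ)).re := by simp
    _ ≤ |(z + (t : ℂ)).re| := le_abs_self _
    _ ≤ ‖z + t‖ := Complex.abs_re_le_norm _
  have hKε := key ε hε.le
  have hKA := key A hA.le
  have hKB := key B hB.le
  set K : ℝ := ‖z + B‖ with hKdef
  -- take absolute values of the root equation
  have habs : ‖z + ε‖ * (‖z + A‖ * K) ≤ ε * (βa * K + βs * δ) := by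
    calc ‖z + ε‖ * (‖z + A‖ * K)
        = ‖(z + ε) * ((z + A) * (z + B))‖ := by rw [norm_mul, norm_mul]
      _ = ‖↑ε * (↑βa * (z + B) + ↑βs * ↑δ)‖ := by rw [hroot]
      _ ≤ ‖(ε : ℂ)‖ * (‖(βa : ℂ) * (z + B)‖ + ‖(βs : ℂ) * (δ : ℂ)‖) := by
          rw [norm_mul]
          exact mul_le_mul_of_nonneg_left (norm_add_le _ _) (norm_nonneg _)
      _ = ε * (βa * K + βs * δ) := by
          rw [norm_mul, norm_mul]
          simp [Complex.norm_real, abs_of_pos hε, abs_of_pos hβa, abs_of_pos hβs,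
            abs_of_pos hδ, hKdef]
  -- derive contradiction
  have hKpos : 0 < K := lt_of_lt_of_le hB hKB
  have habsεA : ε * (A * K) ≤ ‖z + ε‖ * (‖z + A‖ * K) := by
    have h2 : A * K ≤ ‖z + A‖ * K := by
      exact mul_le_mul_of_nonneg_right hKA hKpos.le
    have h3 : 0 ≤ A * K := by positivity
    nlinarith [norm_nonneg (z + A), norm_nonneg (z + ε)]
  nlinarith [mul_le_mul_of_nonneg_left hKB (sub_pos.mpr hβaA).le]
end

section
/- Let J be the 3×3 real matrix with rows (−ε, β_a, β_s), (ε, −(δ + γ_a), 0), (0, δ, −(γ_s + τ_H)), where all parameters are positive. If R₀ > 1, where R₀ = β_a/(δ + γ_a) + β_s δ/((δ + γ_a)(γ_s + τ_H)), then the characteristic polynomial of J has a strictly positive real root; in particular J has an eigenvalue with positive real part (i.e. the disease-free equilibrium is unstable). -/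
open Matrix Polynomial

/-- If `R₀ > 1`, the characteristic polynomial of the Jacobian `J` of the infected
subsystem at the disease-free equilibrium has a strictly positive real root; in
particular `J` has an eigenvalue with positive real part, so the disease-free
equilibrium is unstable. -/
theorem extSEIR_DFE_unstable
    (βa βs ε δ γa γs τH : ℝ)
    (hβa : 0 < βa) (hβs : 0 < βs) (hε : 0 < ε) (hδ : 0 < δ)
    (hγa : 0 < γa) (hγs : 0 < γs) (hτH : 0 < τH)
    (J : Matrix (Fin 3) (Fin 3) ℝ)
    (hJ : J = !![-ε, βa, βs; ε, -(δ + γa), 0; 0, δ, -(γs + τH)])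
    (hR₀ : 1 < βa / (δ + γa) + βs * δ / ((δ + γa) * (γs + τH))) :
    (∃ x : ℝ, 0 < x ∧ J.charpoly.IsRoot x) ∧
      ∃ z : ℂ, (J.charpoly.map (algebraMap ℝ ℂ)).IsRoot z ∧ 0 < z.re := by
  have heval : ∀ x : ℝ, eval x J.charpoly
      = (x+ε)*((x+(δ+γa))*(x+(γs+τH))) - βa*ε*(x+(γs+τH)) - βs*ε*δ := by
    intro x
    rw [hJ, Matrix.charpoly, Matrix.det_fin_three]
    simp [charmatrix_apply, Matrix.one_apply]
    ring
  have hden : 0 < δ + γa := by linarith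
  have hden2 : 0 < γs + τH := by linarith
  have hR : (δ + γa) * (γs + τH) < βa * (γs + τH) + βs * δ := by
    rw [div_add_div _ _ (ne_of_gt hden) (by positivity), lt_div_iff₀ (by positivity)] at hR₀
    nlinarith
  have h0 : eval 0 J.charpoly < 0 := by
    rw [heval]; nlinarith
  set M : ℝ := βa*ε + βs*ε*δ + 1 with hM
  have hMpos : 0 < M := by positivity
  have hprods : 0 < βa*ε ∧ 0 < βs*ε*δ := ⟨by positivity, by positivity⟩
  obtain ⟨hp1, hp2⟩ := hprods
  have hMval : 0 < eval M J.charpoly := by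
    rw [heval]
    have h1 : 1 ≤ M + ε := by rw [hM]; nlinarith
    have step1 : βa*ε*(M+(γs+τH)) + βs*ε*δ < (M+(δ+γa))*(M+(γs+τH)) := by
      rw [hM]
      nlinarith [mul_nonneg hp2.le (by nlinarith : (0:ℝ) ≤ βa*ε + βs*ε*δ + γs + τH),
        mul_pos hp1 hden2]
    have hposfac : 0 < (M+(δ+γa))*(M+(γs+τH)) := by positivity
    have step2 : (M+(δ+γa))*(M+(γs+τH)) ≤ (M+ε)*((M+(δ+γa))*(M+(γs+τH))) :=
      le_mul_of_one_le_left hposfac.le h1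
    linarith
  obtain ⟨x, hx, hfx⟩ := intermediate_value_Ioo (le_of_lt hMpos)
    (J.charpoly.continuousOn) (Set.mem_Ioo.mpr ⟨h0, hMval⟩)
  refine ⟨⟨x, hx.1, hfx⟩, ⟨(x:ℂ), ?_, by simpa using hx.1⟩⟩
  rw [IsRoot, eval_map]
  rw [show ((x:ℂ)) = algebraMap ℝ ℂ x from rfl, eval₂_at_apply]
  simp [hfx]
end

section
/- With P^b an l×l symmetric positive definite real matrix, R an m×m symmetric positive definite real matrix, H an m×l real matrix, K = P^b Hᵀ (H P^b Hᵀ + R)⁻¹ the Kalman gain, and given vectors x^b in ℝ^l and y in ℝ^m, the quadratic cost function J(x) = (x − x^b)ᵀ (P^b)⁻¹ (x − x^b) + (y − H x)ᵀ R⁻¹ (y − H x) attains its unique global minimum over ℝ^l at the Kalman analysis x^a = x^b + K (y − H x^b). -/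
open Matrix

private lemma dp_symm {n : ℕ} (M : Matrix (Fin n) (Fin n) ℝ) (hM : Mᵀ = M)
    (u v : Fin n → ℝ) : u ⬝ᵥ M *ᵥ v = v ⬝ᵥ M *ᵥ u := by
  rw [Matrix.dotProduct_mulVec, ← Matrix.mulVec_transpose, hM, dotProduct_comm]

private lemma dp_mulVec_left {n k : ℕ} (H : Matrix (Fin k) (Fin n) ℝ)
    (u : Fin n → ℝ) (w : Fin k → ℝ) : (H *ᵥ u) ⬝ᵥ w = u ⬝ᵥ (Hᵀ *ᵥ w) := by
  rw [dotProduct_comm, Matrix.dotProduct_mulVec, ← Matrix.mulVec_transpose,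
    dotProduct_comm]

private lemma quad_add {n : ℕ} (M : Matrix (Fin n) (Fin n) ℝ) (hM : Mᵀ = M)
    (a b : Fin n → ℝ) :
    (a + b) ⬝ᵥ M *ᵥ (a + b) =
      a ⬝ᵥ M *ᵥ a + 2 * (a ⬝ᵥ M *ᵥ b) + b ⬝ᵥ M *ᵥ b := by
  simp only [Matrix.mulVec_add, dotProduct_add, add_dotProduct]
  rw [dp_symm M hM b a]
  ring

private lemma quad_sub {n : ℕ} (M : Matrix (Fin n) (Fin n) ℝ) (hM : Mᵀ = M)
    (a b : Fin n → ℝ) :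
    (a - b) ⬝ᵥ M *ᵥ (a - b) =
      a ⬝ᵥ M *ᵥ a - 2 * (b ⬝ᵥ M *ᵥ a) + b ⬝ᵥ M *ᵥ b := by
  simp only [Matrix.mulVec_sub, dotProduct_sub, sub_dotProduct]
  rw [dp_symm M hM a b]
  ring

/-- The quadratic cost `J(x) = (x - x^b)ᵀ (P^b)⁻¹ (x - x^b) + (y - Hx)ᵀ R⁻¹ (y - Hx)`
attains its unique global minimum over `ℝ^l` at the Kalman analysis
`x^a = x^b + K (y - H x^b)`. -/
theorem kalman_analysis_minimizes_cost
    (l m : ℕ)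
    (Pb : Matrix (Fin l) (Fin l) ℝ) (hPb : Pb.PosDef)
    (R : Matrix (Fin m) (Fin m) ℝ) (hR : R.PosDef)
    (H : Matrix (Fin m) (Fin l) ℝ)
    (K : Matrix (Fin l) (Fin m) ℝ)
    (hK : K = Pb * Hᵀ * (H * Pb * Hᵀ + R)⁻¹)
    (xb : Fin l → ℝ) (y : Fin m → ℝ)
    (J : (Fin l → ℝ) → ℝ)
    (hJ : ∀ x, J x = (x - xb) ⬝ᵥ (Pb⁻¹ *ᵥ (x - xb)) +
      (y - H *ᵥ x) ⬝ᵥ (R⁻¹ *ᵥ (y - H *ᵥ x)))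
    (xa : Fin l → ℝ)
    (hxa : xa = xb + K *ᵥ (y - H *ᵥ xb)) :
    (∀ x, J xa ≤ J x) ∧ (∀ x, x ≠ xa → J xa < J x) := by
  have hPbi : (Pb⁻¹).PosDef := hPb.inv
  have hPbiT : (Pb⁻¹)ᵀ = Pb⁻¹ := by
    have := hPbi.isHermitian.eq
    simpa [Matrix.conjTranspose_eq_transpose_of_trivial] using this
  set Q : Matrix (Fin m) (Fin m) ℝ := R⁻¹ with hQ
  have hRi : Q.PosDef := hR.inv
  have hRiT : Qᵀ = Q := by
    have := hRi.isHermitian.eq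
    simpa [Matrix.conjTranspose_eq_transpose_of_trivial] using this
  set A : Matrix (Fin l) (Fin l) ℝ := Pb⁻¹ + Hᵀ * Q * H with hAdef
  have hHQH : (Hᵀ * Q * H).PosSemidef := by
    have h1 : (Hᵀ * Q * Hᵀᴴ).PosSemidef :=
      hRi.posSemidef.mul_mul_conjTranspose_same Hᵀ
    simpa [Matrix.conjTranspose_eq_transpose_of_trivial, Matrix.transpose_transpose] using h1
  have hApd : A.PosDef := hPbi.add_posSemidef hHQH
  set S : Matrix (Fin m) (Fin m) ℝ := H * Pb * Hᵀ + R with hSdef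
  have hSpd : S.PosDef := by
    have h1 : (H * Pb * Hᴴ).PosSemidef := hPb.posSemidef.mul_mul_conjTranspose_same H
    have h2 : (H * Pb * Hᵀ).PosSemidef := by
      simpa [Matrix.conjTranspose_eq_transpose_of_trivial] using h1
    rw [hSdef]
    exact Matrix.PosDef.posSemidef_add h2 hR
  have hSinv : S * S⁻¹ = 1 :=
    Matrix.mul_nonsing_inv _ (isUnit_iff_ne_zero.mpr (ne_of_gt hSpd.det_pos))
  have hPbinv : Pb⁻¹ * Pb = 1 :=
    Matrix.nonsing_inv_mul _ (isUnit_iff_ne_zero.mpr (ne_of_gt hPb.det_pos))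
  have hRinv : Q * R = 1 :=
    Matrix.nonsing_inv_mul _ (isUnit_iff_ne_zero.mpr (ne_of_gt hR.det_pos))
  have hAPH : A * (Pb * Hᵀ) = Hᵀ * Q * S := by
    have h1 : Hᵀ * Q * S = Hᵀ * Q * (H * Pb * Hᵀ) + Hᵀ := by
      rw [hSdef, Matrix.mul_add, Matrix.mul_assoc Hᵀ Q R, hRinv, Matrix.mul_one]
    rw [hAdef, Matrix.add_mul, h1, ← Matrix.mul_assoc Pb⁻¹ Pb Hᵀ, hPbinv,
      Matrix.one_mul, Matrix.mul_assoc (Hᵀ * Q) H (Pb * Hᵀ),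
      ← Matrix.mul_assoc H Pb Hᵀ, add_comm]
  have hAK : A * K = Hᵀ * Q := by
    rw [hK, ← Matrix.mul_assoc, hAPH, Matrix.mul_assoc, hSinv, Matrix.mul_one]
  have hPK : Pb⁻¹ * K = Hᵀ * Q - Hᵀ * Q * H * K := by
    have h : Pb⁻¹ * K + Hᵀ * Q * H * K = Hᵀ * Q := by
      rw [← Matrix.add_mul, ← hAdef, hAK]
    exact eq_sub_of_add_eq h
  -- gradient condition at xa
  have hxaxb : xa - xb = K *ᵥ (y - H *ᵥ xb) := by rw [hxa]; abel
  have hres : y - H *ᵥ xa = (y - H *ᵥ xb) - (H * K) *ᵥ (y - H *ᵥ xb) := by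
    rw [hxa, Matrix.mulVec_add, ← Matrix.mulVec_mulVec]; abel
  have hgrad : Pb⁻¹ *ᵥ (xa - xb) = Hᵀ *ᵥ (Q *ᵥ (y - H *ᵥ xa)) := by
    have hPKH : Pb⁻¹ * (K * H) = Hᵀ * (Q * H) - Hᵀ * (Q * (H * (K * H))) := by
      have h := congrArg (fun M => M * H) hPK
      simpa [Matrix.sub_mul, Matrix.mul_assoc] using h
    rw [hxaxb, hres]
    simp only [hPK, hPKH, Matrix.mulVec_mulVec, Matrix.mulVec_sub, Matrix.sub_mulVec,
      Matrix.mul_assoc]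
    abel
  -- completion of squares
  have key : ∀ x, J x = J xa + (x - xa) ⬝ᵥ (A *ᵥ (x - xa)) := by
    intro x
    have h1 : x - xb = (x - xa) + (xa - xb) := by abel
    have h2 : y - H *ᵥ x = (y - H *ᵥ xa) - H *ᵥ (x - xa) := by
      rw [Matrix.mulVec_sub]; abel
    have s3 : (H *ᵥ (x - xa)) ⬝ᵥ Q *ᵥ (y - H *ᵥ xa) =
        (x - xa) ⬝ᵥ Pb⁻¹ *ᵥ (xa - xb) := by
      rw [dp_mulVec_left, ← hgrad]
    have s4 : (H *ᵥ (x - xa)) ⬝ᵥ Q *ᵥ (H *ᵥ (x - xa)) =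
        (x - xa) ⬝ᵥ (Hᵀ * Q * H) *ᵥ (x - xa) := by
      rw [dp_mulVec_left, Matrix.mulVec_mulVec, Matrix.mulVec_mulVec]
    have s5 : (x - xa) ⬝ᵥ A *ᵥ (x - xa) =
        (x - xa) ⬝ᵥ Pb⁻¹ *ᵥ (x - xa) + (x - xa) ⬝ᵥ (Hᵀ * Q * H) *ᵥ (x - xa) := by
      rw [hAdef, Matrix.add_mulVec, dotProduct_add]
    rw [hJ x, hJ xa, h1, h2, quad_add Pb⁻¹ hPbiT _ _, quad_sub Q hRiT _ _]
    linarith [s3, s4, s5]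
  have hq : ∀ u : Fin l → ℝ, 0 ≤ u ⬝ᵥ (A *ᵥ u) := fun u => by
    simpa using hApd.posSemidef.dotProduct_mulVec_nonneg u
  have hq' : ∀ u : Fin l → ℝ, u ≠ 0 → 0 < u ⬝ᵥ (A *ᵥ u) := fun u hu => by
    simpa using hApd.dotProduct_mulVec_pos hu
  refine ⟨fun x => ?_, fun x hx => ?_⟩
  · rw [key x]; linarith [hq (x - xa)]
  · rw [key x]
    have h0 : x - xa ≠ 0 := sub_ne_zero.mpr hx
    linarith [hq' (x - xa) h0]
end

section
/- Let k ≥ 2, X^b an l×k real matrix, H an m×l real matrix, R an m×m symmetric positive definite real matrix, P^b = (1/(k − 1)) X^b (X^b)ᵀ, P̃^a = ((k − 1) I_k + (H X^b)ᵀ R⁻¹ H X^b)⁻¹, and K = P^b Hᵀ (H P^b Hᵀ + R)⁻¹. Then the ETKF analysis covariance agrees with the Kalman filter analysis covariance: X^b P̃^a (X^b)ᵀ = (I_l − K H) P^b. -/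
open Matrix

set_option maxHeartbeats 1600000 in
/-- The ETKF analysis covariance agrees with the Kalman filter analysis covariance:
`X^b P̃^a (X^b)ᵀ = (I - K H) P^b` with `P^b = (1/(k-1)) X^b (X^b)ᵀ` and
`K = P^b Hᵀ (H P^b Hᵀ + R)⁻¹`. -/
theorem etkf_analysis_covariance_eq_kalman
    (k l m : ℕ) (hk : 2 ≤ k)
    (Xb : Matrix (Fin l) (Fin k) ℝ)
    (H : Matrix (Fin m) (Fin l) ℝ)
    (R : Matrix (Fin m) (Fin m) ℝ) (hR : R.PosDef)
    (Pb : Matrix (Fin l) (Fin l) ℝ)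
    (hPb : Pb = (1 / ((k : ℝ) - 1)) • (Xb * Xbᵀ))
    (Pa : Matrix (Fin k) (Fin k) ℝ)
    (hPa : Pa = (((k : ℝ) - 1) • (1 : Matrix (Fin k) (Fin k) ℝ) +
      (H * Xb)ᵀ * R⁻¹ * (H * Xb))⁻¹)
    (K : Matrix (Fin l) (Fin m) ℝ)
    (hK : K = Pb * Hᵀ * (H * Pb * Hᵀ + R)⁻¹) :
    Xb * Pa * Xbᵀ = (1 - K * H) * Pb := by
  have hk2 : (2:ℝ) ≤ (k:ℝ) := by exact_mod_cast hk
  set c : ℝ := (k:ℝ) - 1 with hc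
  have hcpos : (0:ℝ) < c := by simp only [hc]; linarith
  have hcne : c ≠ 0 := hcpos.ne'
  set A : Matrix (Fin m) (Fin k) ℝ := H * Xb with hA
  set S : Matrix (Fin m) (Fin m) ℝ := c⁻¹ • (A * Aᵀ) + R with hS
  -- S is positive definite, hence invertible
  have hSpsd : (c⁻¹ • (A * Aᵀ)).PosSemidef := by
    have h1 : (Real.sqrt c⁻¹ • A) * (Real.sqrt c⁻¹ • A)ᴴ = c⁻¹ • (A * Aᵀ) := by
      rw [conjTranspose_eq_transpose_of_trivial, transpose_smul, smul_mul, Matrix.mul_smul,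
        smul_smul, Real.mul_self_sqrt (by positivity)]
    rw [← h1]
    exact posSemidef_self_mul_conjTranspose _
  have hSpd : S.PosDef := Matrix.PosDef.posSemidef_add hSpsd hR
  have hRdet : IsUnit R.det := (Matrix.isUnit_iff_isUnit_det R).mp hR.isUnit
  have hSdet : IsUnit S.det := (Matrix.isUnit_iff_isUnit_det S).mp hSpd.isUnit
  have hRinv : R⁻¹ * R = 1 := nonsing_inv_mul _ hRdet
  have hSinv : S * S⁻¹ = 1 := mul_nonsing_inv _ hSdet
  have hAAT : A * Aᵀ = c • (S - R) := by
    rw [hS, add_sub_cancel_right, smul_smul, mul_inv_cancel₀ hcne, one_smul]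
  -- key identity used for Woodbury
  have key : Aᵀ * R⁻¹ * (A * Aᵀ) * S⁻¹ * A
      = c • (Aᵀ * R⁻¹ * A - Aᵀ * S⁻¹ * A) := by
    calc Aᵀ * R⁻¹ * (A * Aᵀ) * S⁻¹ * A
        = c • (Aᵀ * R⁻¹ * S * S⁻¹ * A - Aᵀ * R⁻¹ * R * S⁻¹ * A) := by
          rw [hAAT]
          simp only [Matrix.mul_smul, Matrix.smul_mul, Matrix.mul_sub, Matrix.sub_mul, smul_sub]
      _ = c • (Aᵀ * R⁻¹ * A - Aᵀ * S⁻¹ * A) := by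
          rw [Matrix.mul_assoc (Aᵀ * R⁻¹) S S⁻¹, hSinv, Matrix.mul_one,
            Matrix.mul_assoc Aᵀ R⁻¹ R, hRinv, Matrix.mul_one]
  -- Woodbury: right inverse
  set B : Matrix (Fin k) (Fin k) ℝ :=
    c⁻¹ • (1 : Matrix (Fin k) (Fin k) ℝ) - (c⁻¹ * c⁻¹) • (Aᵀ * S⁻¹ * A) with hB
  have hright : (c • (1 : Matrix (Fin k) (Fin k) ℝ) + Aᵀ * R⁻¹ * A) * B = 1 := by
    rw [hB]
    have expand : (c • (1 : Matrix (Fin k) (Fin k) ℝ) + Aᵀ * R⁻¹ * A) *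
        (c⁻¹ • (1 : Matrix (Fin k) (Fin k) ℝ) - (c⁻¹ * c⁻¹) • (Aᵀ * S⁻¹ * A))
        = (c * c⁻¹) • (1 : Matrix (Fin k) (Fin k) ℝ)
          - (c * (c⁻¹ * c⁻¹)) • (Aᵀ * S⁻¹ * A)
          + c⁻¹ • (Aᵀ * R⁻¹ * A)
          - (c⁻¹ * c⁻¹) • (Aᵀ * R⁻¹ * (A * Aᵀ) * S⁻¹ * A) := by
      simp only [Matrix.add_mul, Matrix.mul_sub, Matrix.smul_mul, Matrix.mul_smul, smul_smul,
        Matrix.mul_one, Matrix.one_mul, Matrix.mul_assoc]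
      module
    rw [expand, key, smul_smul, smul_sub]
    have h1 : c * c⁻¹ = 1 := mul_inv_cancel₀ hcne
    have h2 : c * (c⁻¹ * c⁻¹) = c⁻¹ := by field_simp
    have h3 : c⁻¹ * c⁻¹ * c = c⁻¹ := by field_simp
    rw [h1, h2, h3, one_smul]
    abel
  have hPaB : Pa = B := by
    rw [hPa]
    exact inv_eq_right_inv hright
  -- now compute both sides
  have hPbc : Pb = c⁻¹ • (Xb * Xbᵀ) := by rw [hPb, one_div]
  have hHPH : H * Pb * Hᵀ + R = S := by
    rw [hPbc, hS, hA]
    simp only [Matrix.mul_smul, Matrix.smul_mul, Matrix.mul_assoc, transpose_mul]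
  rw [hPaB, hB, hK, hHPH, hPbc]
  simp only [hA, Matrix.mul_sub, Matrix.sub_mul, Matrix.mul_smul, Matrix.smul_mul, smul_smul,
    Matrix.mul_one, Matrix.one_mul, Matrix.mul_assoc, transpose_mul, smul_sub]
end

section
/- Let k ≥ 2, X^b an l×k real matrix whose columns sum to zero (i.e. X^b 𝟙 = 0 for the all-ones vector 𝟙 ∈ ℝ^k), H an m×l real matrix, R an m×m symmetric positive definite real matrix, and P̃^a = ((k − 1) I_k + (H X^b)ᵀ R⁻¹ H X^b)⁻¹. Then (k − 1) P̃^a 𝟙 = 𝟙, the symmetric positive semidefinite square root W of (k − 1) P̃^a also satisfies W 𝟙 = 𝟙, and consequently the analysis perturbation matrix X^a = X^b W has columns summing to zero (X^a 𝟙 = 0); that is, the ETKF transform preserves the ensemble mean. -/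
open Matrix

/-- If the columns of `X^b` sum to zero, then `(k - 1) P̃^a 𝟙 = 𝟙`, the symmetric
positive semidefinite square root `W` of `(k - 1) P̃^a` satisfies `W 𝟙 = 𝟙`, and the
analysis perturbation matrix `X^a = X^b W` has columns summing to zero: the ETKF
transform preserves the ensemble mean. -/
theorem etkf_transform_preserves_mean
    (k l m : ℕ) (hk : 2 ≤ k)
    (Xb : Matrix (Fin l) (Fin k) ℝ)
    (hXb : Xb *ᵥ (fun _ => (1 : ℝ)) = 0)
    (H : Matrix (Fin m) (Fin l) ℝ)
    (R : Matrix (Fin m) (Fin m) ℝ) (hR : R.PosDef)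
    (Pa : Matrix (Fin k) (Fin k) ℝ)
    (hPa : Pa = (((k : ℝ) - 1) • (1 : Matrix (Fin k) (Fin k) ℝ) +
      (H * Xb)ᵀ * R⁻¹ * (H * Xb))⁻¹)
    (W : Matrix (Fin k) (Fin k) ℝ)
    (hW : W.PosSemidef) (hWsq : W * W = ((k : ℝ) - 1) • Pa)
    (Xa : Matrix (Fin l) (Fin k) ℝ)
    (hXa : Xa = Xb * W) :
    (((k : ℝ) - 1) • Pa) *ᵥ (fun _ => (1 : ℝ)) = (fun _ => (1 : ℝ)) ∧
      W *ᵥ (fun _ => (1 : ℝ)) = (fun _ => (1 : ℝ)) ∧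
      Xa *ᵥ (fun _ => (1 : ℝ)) = 0 := by
  have hkpos : (0 : ℝ) < (k : ℝ) - 1 := by
    have : (2 : ℝ) ≤ (k : ℝ) := by exact_mod_cast hk
    linarith
  set v : Fin k → ℝ := fun _ => (1 : ℝ) with hv
  set B : Matrix (Fin k) (Fin k) ℝ := (H * Xb)ᵀ * R⁻¹ * (H * Xb) with hB
  set A : Matrix (Fin k) (Fin k) ℝ :=
    ((k : ℝ) - 1) • (1 : Matrix (Fin k) (Fin k) ℝ) + B with hA
  -- B is positive semidefinite
  have hRinv : (R⁻¹).PosDef := hR.inv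
  have hBps : B.PosSemidef := by
    have := hRinv.posSemidef.conjTranspose_mul_mul_same (H * Xb)
    simpa [hB, Matrix.mul_assoc] using this
  -- (k-1)•1 is positive definite
  have hIdef : (((k : ℝ) - 1) • (1 : Matrix (Fin k) (Fin k) ℝ)).PosDef := by
    refine Matrix.PosDef.of_dotProduct_mulVec_pos ?_ ?_
    · simp [Matrix.IsHermitian, Matrix.conjTranspose_smul]
    · intro x hx
      have hxx : 0 < star x ⬝ᵥ x := by
        simpa using (Matrix.dotProduct_star_self_pos_iff).mpr hx
      simpa [Matrix.smul_mulVec, Matrix.one_mulVec, dotProduct_smul] using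
        mul_pos hkpos hxx
  have hAdef : A.PosDef := hIdef.add_posSemidef hBps
  have hAunit : IsUnit A.det := hAdef.det_pos.ne'.isUnit
  -- A *ᵥ v = (k-1) • v
  have hBv : B *ᵥ v = 0 := by
    rw [hB, ← Matrix.mulVec_mulVec, ← Matrix.mulVec_mulVec]
    have : (H * Xb) *ᵥ v = 0 := by
      rw [← Matrix.mulVec_mulVec, hXb, Matrix.mulVec_zero]
    rw [this, Matrix.mulVec_zero, Matrix.mulVec_zero]
  have hAv : A *ᵥ v = ((k : ℝ) - 1) • v := by
    rw [hA, Matrix.add_mulVec, hBv, add_zero, Matrix.smul_mulVec,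
      Matrix.one_mulVec]
  -- first conclusion
  have h1 : (((k : ℝ) - 1) • Pa) *ᵥ v = v := by
    have : A⁻¹ *ᵥ (A *ᵥ v) = v := by
      rw [Matrix.mulVec_mulVec, Matrix.nonsing_inv_mul A hAunit, Matrix.one_mulVec]
    rw [hAv, Matrix.mulVec_smul] at this
    rw [hPa, Matrix.smul_mulVec, this]
  -- second conclusion : W *ᵥ v = v
  have hW2v : W *ᵥ (W *ᵥ v) = v := by
    rw [Matrix.mulVec_mulVec, hWsq, h1]
  have h2 : W *ᵥ v = v := by
    set u : Fin k → ℝ := W *ᵥ v - v with hu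
    have hWu : W *ᵥ u = -u := by
      rw [hu, Matrix.mulVec_sub, hW2v]
      abel
    have hnonneg : 0 ≤ u ⬝ᵥ (W *ᵥ u) := by
      simpa using hW.dotProduct_mulVec_nonneg u
    have : u ⬝ᵥ (W *ᵥ u) = -(u ⬝ᵥ u) := by
      rw [hWu, dotProduct_neg]
    have huz : u ⬝ᵥ u = 0 := by
      have h0 : u ⬝ᵥ u ≤ 0 := by linarith [hnonneg, this.symm ▸ hnonneg]
      have h0' : 0 ≤ u ⬝ᵥ u := by simpa using dotProduct_star_self_nonneg u
      linarith
    have : u = 0 := by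
      ext i
      have := dotProduct_self_eq_zero.mp huz
      exact congrFun this i
    have := sub_eq_zero.mp (hu ▸ this)
    exact this
  refine ⟨h1, h2, ?_⟩
  rw [hXa, ← Matrix.mulVec_mulVec, h2, hXb]
end
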